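/- For every K > 0, the system of equations l(r₂) − l(r₁) = 2K and 1/(r₂(1−r₂)) = 1/(r₁(1−r₁)) has a unique solution (r₁, r₂) with 0 < r₁ < r₂ < 1, and this solution satisfies r₁ = 1 − r₂ and l(r₂) = K. (This is the reduction of the Bayesian sequential probability ratio test equations in the payoff-symmetric case a = b, with K = b/ĉ.) -/

import Mathlib

/-- `l(r) = 2·log(r/(1−r)) − 1/r + 1/(1−r)`. -/
noncomputable def l (r : ℝ) : ℝ := 2 * Real.log (r / (1 - r)) - 1 / r + 1 / (1 - r)

lemma l_reflect {r : ℝ} (h0 : 0 < r) (h1 : r < 1) : l (1 - r) = - l r := by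
  have hr : r ≠ 0 := h0.ne'
  have h1r : (1 : ℝ) - r ≠ 0 := by intro h; nlinarith
  unfold l
  rw [show (1:ℝ) - (1 - r) = r by ring, Real.log_div h1r hr, Real.log_div hr h1r]
  ring

lemma l_hasDerivAt {x : ℝ} (h0 : 0 < x) (h1 : x < 1) :
    HasDerivAt l (2 / x + 2 / (1 - x) + 1 / x ^ 2 + 1 / (1 - x) ^ 2) x := by
  have hx : x ≠ 0 := h0.ne'
  have h1x : (0:ℝ) < 1 - x := by linarith
  have h1x' : (1:ℝ) - x ≠ 0 := h1x.ne'
  have h1d : HasDerivAt (fun r : ℝ => 1 - r) (-1) x := by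
    simpa using (hasDerivAt_id x).const_sub 1
  have hlog1 : HasDerivAt (fun r : ℝ => Real.log r) (1 / x) x := by
    simpa [one_div] using Real.hasDerivAt_log hx
  have hlog2 : HasDerivAt (fun r : ℝ => Real.log (1 - r)) (-(1 / (1 - x))) x := by
    have := (Real.hasDerivAt_log h1x').comp x h1d
    simpa [one_div, Function.comp_def] using this
  have hinv1 : HasDerivAt (fun r : ℝ => 1 / r) (-(1 / x ^ 2)) x := by
    simpa [one_div] using hasDerivAt_inv hx
  have hinv2 : HasDerivAt (fun r : ℝ => 1 / (1 - r)) (1 / (1 - x) ^ 2) x := by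
    have := (hasDerivAt_inv h1x').comp x h1d
    simpa [one_div, Function.comp_def] using this
  have hg : HasDerivAt
      (fun r : ℝ => 2 * Real.log r - 2 * Real.log (1 - r) - 1 / r + 1 / (1 - r))
      (2 * (1 / x) - 2 * (-(1 / (1 - x))) - (-(1 / x ^ 2)) + 1 / (1 - x) ^ 2) x :=
    (((hlog1.const_mul 2).sub (hlog2.const_mul 2)).sub hinv1).add hinv2
  have heq : l =ᶠ[nhds x]
      fun r => 2 * Real.log r - 2 * Real.log (1 - r) - 1 / r + 1 / (1 - r) := by
    filter_upwards [Ioo_mem_nhds h0 h1] with r hr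
    have hr0 : r ≠ 0 := hr.1.ne'
    have hr1 : (1:ℝ) - r ≠ 0 := by have := hr.2; intro h; nlinarith
    unfold l
    rw [Real.log_div hr0 hr1]
    ring
  have := hg.congr_of_eventuallyEq heq
  exact this.congr_deriv (by ring)

lemma l_strictMonoOn : StrictMonoOn l (Set.Ioo 0 1) := by
  apply strictMonoOn_of_deriv_pos (convex_Ioo 0 1)
  · exact fun x hx => (l_hasDerivAt hx.1 hx.2).continuousAt.continuousWithinAt
  · intro x hx
    rw [interior_Ioo] at hx
    rw [(l_hasDerivAt hx.1 hx.2).deriv]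
    have h1x : (0:ℝ) < 1 - x := by linarith [hx.2]
    have h0x := hx.1
    positivity

lemma l_half : l (1/2) = 0 := by
  norm_num [l]

lemma l_key (K r₁ r₂ : ℝ) (h1 : 0 < r₁) (h12 : r₁ < r₂) (h2 : r₂ < 1)
    (hl : l r₂ - l r₁ = 2 * K)
    (hq : 1 / (r₂ * (1 - r₂)) = 1 / (r₁ * (1 - r₁))) : r₁ = 1 - r₂ ∧ l r₂ = K := by
  have h1' : 0 < 1 - r₁ := by linarith
  have h2' : 0 < 1 - r₂ := by linarith
  have hp1 : (0:ℝ) < r₁ * (1 - r₁) := by positivity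
  have h20 : (0:ℝ) < r₂ := lt_trans h1 h12
  have hp2 : (0:ℝ) < r₂ * (1 - r₂) := mul_pos h20 h2'
  have hprod : r₂ * (1 - r₂) = r₁ * (1 - r₁) := by
    field_simp at hq; linarith
  have hfac : (r₂ - r₁) * (1 - r₁ - r₂) = 0 := by linear_combination hprod
  have hsum : r₁ = 1 - r₂ := by
    rcases mul_eq_zero.1 hfac with h | h
    · exfalso; linarith
    · linarith
  refine ⟨hsum, ?_⟩
  have hrefl : l (1 - r₂) = - l r₂ := l_reflect (by linarith) h2
  rw [hsum, hrefl] at hl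
  linarith

lemma exists_root (K : ℝ) (hK : 0 < K) : ∃ r₂, 1/2 < r₂ ∧ r₂ < 1 ∧ l r₂ = K := by
  have hK3 : (0:ℝ) < K + 3 := by linarith
  obtain ⟨s, hs⟩ : ∃ s : ℝ, s = 1 - 1 / (K + 3) := ⟨_, rfl⟩
  have hsub : (1:ℝ) - s = 1 / (K + 3) := by rw [hs]; ring
  have hs1 : s < 1 := by
    have : (0:ℝ) < 1 / (K + 3) := by positivity
    rw [hs]; linarith
  have hs2 : (1:ℝ)/2 ≤ s := by
    have : 1 / (K + 3) ≤ (1:ℝ)/2 := by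
      rw [div_le_div_iff₀ hK3 (by norm_num)]; linarith
    rw [hs]; linarith
  have hspos : (0:ℝ) < s := by linarith
  have hls : K + 1 ≤ l s := by
    have h1s : (0:ℝ) < 1 - s := by linarith
    have hlog : 0 ≤ Real.log (s / (1 - s)) := by
      apply Real.log_nonneg
      rw [le_div_iff₀ h1s]; linarith
    have hinv : 1 / s ≤ 2 := by
      rw [div_le_iff₀ hspos]; linarith
    have hlast : 1 / (1 - s) = K + 3 := by
      rw [hsub, one_div_one_div]
    unfold l
    rw [hlast]
    linarith
  have hcont : ContinuousOn l (Set.Icc (1/2) s) := by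
    intro x hx
    exact (l_hasDerivAt (by linarith [hx.1]) (by linarith [hx.2])).continuousAt.continuousWithinAt
  have hKmem : K ∈ Set.Icc (l (1/2)) (l s) := by
    rw [l_half]; exact ⟨hK.le, by linarith⟩
  obtain ⟨r, hr, hlr⟩ := intermediate_value_Icc hs2 hcont hKmem
  refine ⟨r, ?_, by linarith [hr.2], hlr⟩
  rcases eq_or_lt_of_le hr.1 with h | h
  · exfalso; rw [← h, l_half] at hlr; linarith
  · exact h

theorem stmt_13 (K : ℝ) (hK : 0 < K) :
    (∃! p : ℝ × ℝ, 0 < p.1 ∧ p.1 < p.2 ∧ p.2 < 1 ∧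
      l p.2 - l p.1 = 2 * K ∧
      1 / (p.2 * (1 - p.2)) = 1 / (p.1 * (1 - p.1))) ∧
    (∀ r₁ r₂ : ℝ, 0 < r₁ → r₁ < r₂ → r₂ < 1 →
      l r₂ - l r₁ = 2 * K → 1 / (r₂ * (1 - r₂)) = 1 / (r₁ * (1 - r₁)) →
      r₁ = 1 - r₂ ∧ l r₂ = K) := by
  obtain ⟨r₂, hr2a, hr2b, hr2K⟩ := exists_root K hK
  have hr2mem : r₂ ∈ Set.Ioo (0:ℝ) 1 := ⟨by linarith, hr2b⟩
  constructor
  · refine ⟨(1 - r₂, r₂), ⟨by simp; linarith, by simp; linarith, hr2b, ?_, ?_⟩, ?_⟩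
    · have := l_reflect (show (0:ℝ) < r₂ by linarith) hr2b
      simp only
      rw [this, hr2K]; ring
    · simp only
      rw [show (1:ℝ) - (1 - r₂) = r₂ by ring, mul_comm]
    · rintro ⟨q1, q2⟩ ⟨hq1, hq2, hq3, hq4, hq5⟩
      simp only at hq1 hq2 hq3 hq4 hq5 ⊢
      obtain ⟨he1, he2⟩ := l_key K q1 q2 hq1 hq2 hq3 hq4 hq5
      have hq2mem : q2 ∈ Set.Ioo (0:ℝ) 1 := ⟨by linarith, hq3⟩
      have : q2 = r₂ := l_strictMonoOn.injOn hq2mem hr2mem (by rw [he2, hr2K])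
      rw [Prod.mk.injEq]
      exact ⟨by rw [he1, this], this⟩
  · exact fun r₁ r₂ h1 h2 h3 h4 h5 => l_key K r₁ r₂ h1 h2 h3 h4 h5
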